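/- Let q be a real number with 0 < q < 1, h ∈ ℤ with h ≥ r, r a positive integer, n a natural number, and x > 0 real. Then [2]_q^r \sum_{m=0}^{\infty} \binom{m+r-1}{m}_q (-q^{h-r+1})^m [m+x]_q^n = \frac{[2]_q^r}{(1-q)^n} \sum_{l=0}^{n} \binom{n}{l} \frac{(-q^x)^l}{\prod_{j=0}^{r-1} (1 + q^{h-r+l+1+j})}. -/

import Mathlib

noncomputable def qnum (q x : ℝ) : ℝ := (1 - q ^ x) / (1 - q)

/-- Gaussian binomial coefficient via the q-Pascal recurrence. -/
noncomputable def gbinom (q : ℝ) : ℕ → ℕ → ℝ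
  | 0, 0 => 1
  | 0, _ + 1 => 0
  | _ + 1, 0 => 1
  | n + 1, k + 1 => gbinom q n k + q ^ (k + 1) * gbinom q n (k + 1)

lemma gbinom_zero_right (q : ℝ) (n : ℕ) : gbinom q n 0 = 1 := by
  cases n <;> rfl

lemma gbinom_eq_zero (q : ℝ) : ∀ n k : ℕ, n < k → gbinom q n k = 0 := by
  intro n
  induction n with
  | zero => intro k hk; cases k with
    | zero => omega
    | succ k => rfl
  | succ n ih =>
    intro k hk
    cases k with
    | zero => omega
    | succ k =>
      show gbinom q n k + q ^ (k+1) * gbinom q n (k+1) = 0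
      rw [ih k (by omega), ih (k+1) (by omega)]
      ring

lemma gbinom_nonneg (q : ℝ) (hq : 0 ≤ q) : ∀ n k : ℕ, 0 ≤ gbinom q n k := by
  intro n
  induction n with
  | zero => intro k; cases k with
    | zero => norm_num [gbinom]
    | succ k => exact le_of_eq rfl.symm
  | succ n ih =>
    intro k
    cases k with
    | zero => rw [gbinom_zero_right]; norm_num
    | succ k =>
      show 0 ≤ gbinom q n k + q ^ (k+1) * gbinom q n (k+1)
      exact add_nonneg (ih k) (mul_nonneg (pow_nonneg hq _) (ih (k+1)))

lemma gbinom_conv (q : ℝ) (r : ℕ) : ∀ m : ℕ,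
    gbinom q (m + r) m = ∑ k ∈ Finset.range (m + 1), q ^ k * gbinom q (k + r - 1) k := by
  intro m
  induction m with
  | zero =>
    simp [gbinom_zero_right]
  | succ m ih =>
    rw [Finset.sum_range_succ, ← ih]
    have h1 : m + 1 + r - 1 = m + r := by omega
    have h2 : m + 1 + r = (m + r) + 1 := by omega
    rw [h1, h2]
    show gbinom q (m + r) m + q ^ (m + 1) * gbinom q (m + r) (m + 1)
        = gbinom q (m + r) m + q ^ (m + 1) * gbinom q (m + r) (m + 1)
    rfl

lemma gbinom_le (q : ℝ) (hq0 : 0 < q) (hq1 : q < 1) :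
    ∀ (r m : ℕ), gbinom q (m + r - 1) m ≤ (1 - q)⁻¹ ^ r := by
  intro r
  induction r with
  | zero =>
    intro m
    cases m with
    | zero => simp [gbinom]
    | succ m =>
      rw [gbinom_eq_zero q _ _ (by omega)]
      norm_num
  | succ r ih =>
    intro m
    have h1 : m + (r + 1) - 1 = m + r := by omega
    rw [h1, gbinom_conv, pow_succ']
    calc ∑ k ∈ Finset.range (m + 1), q ^ k * gbinom q (k + r - 1) k
        ≤ ∑ k ∈ Finset.range (m + 1), q ^ k * (1 - q)⁻¹ ^ r := by
          apply Finset.sum_le_sum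
          intro k _
          exact mul_le_mul_of_nonneg_left (ih k) (pow_nonneg hq0.le k)
      _ = (∑ k ∈ Finset.range (m + 1), q ^ k) * (1 - q)⁻¹ ^ r := by
          rw [Finset.sum_mul]
      _ ≤ (1 - q)⁻¹ * (1 - q)⁻¹ ^ r := by
          apply mul_le_mul_of_nonneg_right _ (pow_nonneg (inv_nonneg.mpr (by linarith)) r)
          have := Summable.sum_le_tsum (Finset.range (m + 1)) (fun i _ => pow_nonneg hq0.le i)
            (summable_geometric_of_lt_one hq0.le hq1)
          rwa [tsum_geometric_of_lt_one hq0.le hq1] at this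

lemma gbinom_hasSum (q : ℝ) (hq0 : 0 < q) (hq1 : q < 1) :
    ∀ (r : ℕ) (t : ℝ), |t| < 1 →
      HasSum (fun m => gbinom q (m + r - 1) m * t ^ m)
        (∏ j ∈ Finset.range r, (1 - q ^ j * t)⁻¹) := by
  intro r
  induction r with
  | zero =>
    intro t ht
    rw [Finset.prod_range_zero]
    have : (fun m => gbinom q (m + 0 - 1) m * t ^ m) = fun m => if m = 0 then 1 else 0 := by
      funext m
      cases m with
      | zero => simp [gbinom]
      | succ m =>
        rw [gbinom_eq_zero q _ _ (by omega)]
        simp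
    rw [this]
    exact hasSum_ite_eq 0 1
  | succ r ih =>
    intro t ht
    have hqt : |q * t| < 1 := by
      rw [abs_mul, abs_of_pos hq0]
      calc q * |t| ≤ 1 * |t| := by
            exact mul_le_mul_of_nonneg_right hq1.le (abs_nonneg t)
        _ < 1 := by rwa [one_mul]
    set u : ℕ → ℝ := fun k => gbinom q (k + r - 1) k * (q * t) ^ k with hu
    set v : ℕ → ℝ := fun i => t ^ i with hv
    have hU := ih (q * t) hqt
    have hV : HasSum v (1 - t)⁻¹ := hasSum_geometric_of_norm_lt_one (by rwa [Real.norm_eq_abs])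
    have hUn : Summable fun k => ‖u k‖ := by
      apply Summable.of_nonneg_of_le (fun k => norm_nonneg _)
        (fun k => ?_) (Summable.mul_left ((1 - q)⁻¹ ^ r)
          (summable_geometric_of_lt_one (abs_nonneg (q*t)) hqt))
      rw [Real.norm_eq_abs, hu, abs_mul,
        abs_of_nonneg (gbinom_nonneg q hq0.le _ _), abs_pow]
      exact mul_le_mul_of_nonneg_right (gbinom_le q hq0 hq1 r k) (pow_nonneg (abs_nonneg _) k)
    have hVn : Summable fun i => ‖v i‖ := by
      simpa [hv, Real.norm_eq_abs, abs_pow] using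
        summable_geometric_of_lt_one (abs_nonneg t) ht
    have hconv := hasSum_sum_range_mul_of_summable_norm hUn hVn
    rw [hU.tsum_eq, hV.tsum_eq] at hconv
    have heq : (fun m => ∑ k ∈ Finset.range (m + 1), u k * v (m - k))
        = fun m => gbinom q (m + (r + 1) - 1) m * t ^ m := by
      funext m
      have h1 : m + (r + 1) - 1 = m + r := by omega
      rw [h1, gbinom_conv, Finset.sum_mul]
      apply Finset.sum_congr rfl
      intro k hk
      have hk' : k ≤ m := by simpa using Nat.lt_succ_iff.mp (Finset.mem_range.mp hk)
      have : t ^ m = t ^ k * t ^ (m - k) := by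
        rw [← pow_add, Nat.add_sub_cancel' hk']
      rw [hu, hv]
      simp only []
      rw [this, mul_pow]
      ring
    rw [heq] at hconv
    convert hconv using 1
    case e'_3 => rfl
    rw [Finset.prod_range_succ']
    simp only [pow_zero, one_mul, pow_succ']
    congr 1
    apply Finset.prod_congr rfl
    intro j _
    congr 1
    ring

theorem series_eq_closed_form (q : ℝ) (hq0 : 0 < q) (hq1 : q < 1)
    (h : ℤ) (r : ℕ) (hr : 0 < r) (hhr : (r : ℤ) ≤ h) (n : ℕ) (x : ℝ) (hx : 0 < x) :
    (1 + q) ^ r *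
        (∑' m : ℕ, gbinom q (m + r - 1) m * (-(q : ℝ) ^ (h - r + 1)) ^ m *
          (qnum q ((m : ℝ) + x)) ^ n) =
      ((1 + q) ^ r / (1 - q) ^ n) *
        ∑ l ∈ Finset.range (n + 1), (n.choose l : ℝ) * (-(q ^ x)) ^ l /
          ∏ j ∈ Finset.range r, (1 + q ^ (h - r + l + 1 + j)) := by
  have hq1' : (0:ℝ) < 1 - q := by linarith
  have hqne : q ≠ 0 := ne_of_gt hq0
  set s : ℝ := -(q ^ (h - (r:ℤ) + 1)) with hs
  set T : ℕ → ℝ := fun l => -(q ^ (h - (r:ℤ) + 1 + l)) with hTdef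
  have hT : ∀ l : ℕ, s * q ^ l = T l := by
    intro l
    simp only [hTdef, hs]
    rw [neg_mul, ← zpow_natCast q l, ← zpow_add₀ hqne]
  have habs : ∀ l : ℕ, |T l| < 1 := by
    intro l
    simp only [hTdef, abs_neg]
    rw [abs_of_pos (zpow_pos hq0 _)]
    exact zpow_lt_one₀ hq0 hq1 (by omega)
  have hprod : ∀ l : ℕ, (∏ j ∈ Finset.range r, (1 - q ^ j * T l)⁻¹)
      = (∏ j ∈ Finset.range r, (1 + q ^ (h - r + l + 1 + (j:ℤ))))⁻¹ := by
    intro l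
    rw [← Finset.prod_inv_distrib]
    apply Finset.prod_congr rfl
    intro j _
    congr 1
    simp only [hTdef]
    rw [mul_neg, sub_neg_eq_add]
    congr 1
    rw [← zpow_natCast q j, ← zpow_add₀ hqne]
    congr 1
    ring
  set c : ℕ → ℝ := fun l => (n.choose l : ℝ) * (-(q ^ x)) ^ l * (1 - q)⁻¹ ^ n with hc
  have key : ∀ l : ℕ, HasSum (fun m => c l * (gbinom q (m + r - 1) m * (T l) ^ m))
      (c l * (∏ j ∈ Finset.range r, (1 + q ^ (h - r + l + 1 + (j:ℤ))))⁻¹) := by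
    intro l
    have := (gbinom_hasSum q hq0 hq1 r (T l) (habs l)).mul_left (c l)
    rwa [hprod l] at this
  have hpoint : ∀ m : ℕ, gbinom q (m + r - 1) m * s ^ m * (qnum q ((m : ℝ) + x)) ^ n
      = ∑ l ∈ Finset.range (n + 1), c l * (gbinom q (m + r - 1) m * (T l) ^ m) := by
    intro m
    have hxq : q ^ ((m:ℝ) + x) = q ^ m * q ^ x := by
      rw [Real.rpow_add hq0, Real.rpow_natCast]
    have hpow : (1 - q ^ m * q ^ x) ^ n
        = ∑ l ∈ Finset.range (n + 1), (-(q ^ m * q ^ x)) ^ l * (n.choose l : ℝ) := by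
      have := add_pow (-(q ^ m * q ^ x)) 1 n
      simpa [neg_add_eq_sub] using this
    rw [qnum, hxq, div_pow, hpow, Finset.sum_div, Finset.mul_sum]
    apply Finset.sum_congr rfl
    intro l _
    rw [hc]
    simp only []
    rw [← hT l]
    rw [div_eq_mul_inv, ← inv_pow]
    ring
  rw [tsum_congr hpoint,
    Summable.tsum_finsetSum (fun l _ => (key l).summable)]
  have : ∀ l ∈ Finset.range (n + 1),
      (∑' m : ℕ, c l * (gbinom q (m + r - 1) m * (T l) ^ m))
      = c l * (∏ j ∈ Finset.range r, (1 + q ^ (h - r + l + 1 + (j:ℤ))))⁻¹ :=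
    fun l _ => (key l).tsum_eq
  rw [Finset.sum_congr rfl this, Finset.mul_sum, Finset.mul_sum]
  apply Finset.sum_congr rfl
  intro l _
  rw [hc]
  simp only []
  rw [div_eq_mul_inv, div_eq_mul_inv, ← inv_pow]
  push_cast
  ring
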